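/- Let G be a finite non-abelian group. Then the vertex connectivity of the non-commuting graph Γ_G is divisible by |Z(G)|. -/

import Mathlib

open scoped Classical
/-- The non-commuting graph of a group `G`. -/
def ncGraph (G : Type*) [Group G] : SimpleGraph {x : G // x ∉ Subgroup.center G} where
  Adj x y := (x : G) * y ≠ (y : G) * x
  symm := ⟨fun _ _ h e => h e.symm⟩
  loopless := ⟨fun _ h => h rfl⟩

/-- The vertex connectivity of a finite graph: the least size of a set of
vertices whose deletion disconnects the graph. -/
noncomputable def vertexConnectivity {V : Type*} [Fintype V] (Γ : SimpleGraph V) : ℕ :=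
  sInf {k | ∃ S : Finset V, S.card = k ∧
    ¬ (Γ.induce {v : V | v ∉ S}).Connected}

section Aux
variable {G : Type*} [Group G] [Fintype G]

omit [Fintype G] in
lemma aux_noncenter {x z : G} (hx : x ∉ Subgroup.center G) (hz : z ∈ Subgroup.center G) :
    x * z ∉ Subgroup.center G := by
  intro h
  exact hx (by simpa using mul_mem h (inv_mem hz))

/-- If `S` is a vertex cut containing `x` but not `x*z` (z central), then `S.erase x`
is still a vertex cut. -/
lemma aux_erase_cut {S : Finset {x : G // x ∉ Subgroup.center G}}
    (x : {x : G // x ∉ Subgroup.center G}) (hx : x ∈ S)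
    {z : G} (hz : z ∈ Subgroup.center G)
    (hxz : (x : G) * z ∉ Subgroup.center G)
    (hxzS : (⟨(x : G) * z, hxz⟩ : {x : G // x ∉ Subgroup.center G}) ∉ S)
    (hdis : ¬ ((ncGraph G).induce {v | v ∉ S}).Connected) :
    ¬ ((ncGraph G).induce {v | v ∉ S.erase x}).Connected := by
  intro hcon
  apply hdis
  have hzc : ∀ g : G, g * z = z * g := (Subgroup.mem_center_iff.mp hz)
  have hmem : ∀ v : {x : G // x ∉ Subgroup.center G},
      v ∈ ({v | v ∉ S.erase x} : Set _) → v ≠ x → v ∈ ({v | v ∉ S} : Set _) := by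
    intro v hv hvx hvS
    exact hv (Finset.mem_erase.mpr ⟨hvx, hvS⟩)
  let fn : ↥({v | v ∉ S.erase x} : Set _) → ↥({v | v ∉ S} : Set _) := fun v =>
    if h : (v : {x : G // x ∉ Subgroup.center G}) = x then ⟨⟨(x : G) * z, hxz⟩, hxzS⟩
    else ⟨v, hmem _ v.2 h⟩
  have hfn_ne : ∀ (v : ↥({v | v ∉ S.erase x} : Set _))
      (h : (v : {x : G // x ∉ Subgroup.center G}) ≠ x),
      fn v = ⟨v, hmem _ v.2 h⟩ := fun v h => dif_neg h
  have hfn_eq : ∀ (v : ↥({v | v ∉ S.erase x} : Set _))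
      (h : (v : {x : G // x ∉ Subgroup.center G}) = x),
      fn v = ⟨⟨(x : G) * z, hxz⟩, hxzS⟩ := fun v h => dif_pos h
  have hadj : ∀ a b, ((ncGraph G).induce {v | v ∉ S.erase x}).Adj a b →
      ((ncGraph G).induce {v | v ∉ S}).Adj (fn a) (fn b) := by
    intro a b hab
    have hab' : ((a : {x : G // x ∉ Subgroup.center G}) : G) * (b : {x : G // x ∉ Subgroup.center G}) ≠
        ((b : {x : G // x ∉ Subgroup.center G}) : G) * (a : {x : G // x ∉ Subgroup.center G}) := hab
    by_cases ha : (a : {x : G // x ∉ Subgroup.center G}) = x <;>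
      by_cases hb : (b : {x : G // x ∉ Subgroup.center G}) = x
    · exact absurd (by rw [ha, hb]) hab'
    · rw [hfn_eq a ha, hfn_ne b hb]
      have ha' : ((a : {x : G // x ∉ Subgroup.center G}) : G) = (x : G) := by rw [ha]
      show ((x : G) * z) * _ ≠ _ * ((x : G) * z)
      intro h
      apply hab'
      rw [ha']
      set bb : G := ((b : {x : G // x ∉ Subgroup.center G}) : G)
      have key : ((x : G) * bb) * z = (bb * (x : G)) * z := by
        calc ((x : G) * bb) * z = ((x : G) * z) * bb := by
              rw [mul_assoc, hzc bb, ← mul_assoc]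
          _ = bb * ((x : G) * z) := h
          _ = (bb * (x : G)) * z := by rw [← mul_assoc]
      exact mul_right_cancel key
    · rw [hfn_ne a ha, hfn_eq b hb]
      have hb' : ((b : {x : G // x ∉ Subgroup.center G}) : G) = (x : G) := by rw [hb]
      show _ * ((x : G) * z) ≠ ((x : G) * z) * _
      intro h
      apply hab'
      rw [hb']
      set aa : G := ((a : {x : G // x ∉ Subgroup.center G}) : G)
      have key : (aa * (x : G)) * z = ((x : G) * aa) * z := by
        calc (aa * (x : G)) * z = aa * ((x : G) * z) := by rw [mul_assoc]
          _ = ((x : G) * z) * aa := h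
          _ = ((x : G) * aa) * z := by rw [mul_assoc, ← hzc aa, ← mul_assoc]
      exact mul_right_cancel key
    · rw [hfn_ne a ha, hfn_ne b hb]
      exact hab'
  let f : ((ncGraph G).induce {v | v ∉ S.erase x}) →g ((ncGraph G).induce {v | v ∉ S}) :=
    ⟨fn, fun {a b} h => hadj a b h⟩
  haveI : Nonempty ↥({v | v ∉ S} : Set _) := ⟨⟨⟨(x : G) * z, hxz⟩, hxzS⟩⟩
  refine SimpleGraph.Connected.mk ?_
  intro u v
  have hu' : (u : {x : G // x ∉ Subgroup.center G}) ∈ ({v | v ∉ S.erase x} : Set _) :=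
    fun h => u.2 (Finset.mem_of_mem_erase h)
  have hv' : (v : {x : G // x ∉ Subgroup.center G}) ∈ ({v | v ∉ S.erase x} : Set _) :=
    fun h => v.2 (Finset.mem_of_mem_erase h)
  have hr := hcon.preconnected ⟨u, hu'⟩ ⟨v, hv'⟩
  have hru := hr.map f
  have hux : ((⟨u, hu'⟩ : ↥({v | v ∉ S.erase x} : Set _)) :
      {x : G // x ∉ Subgroup.center G}) ≠ x := fun h => u.2 (h ▸ hx)
  have hvx : ((⟨v, hv'⟩ : ↥({v | v ∉ S.erase x} : Set _)) :
      {x : G // x ∉ Subgroup.center G}) ≠ x := fun h => v.2 (h ▸ hx)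
  have hfu : f ⟨u, hu'⟩ = u := by
    show fn _ = u
    rw [hfn_ne _ hux]
  have hfv : f ⟨v, hv'⟩ = v := by
    show fn _ = v
    rw [hfn_ne _ hvx]
  rwa [hfu, hfv] at hru

/-- A finset closed under right multiplication by central elements has cardinality
divisible by the order of the center. -/
lemma aux_card_dvd (S : Finset G)
    (hcl : ∀ g ∈ S, ∀ z ∈ Subgroup.center G, g * z ∈ S) :
    Nat.card (Subgroup.center G) ∣ S.card := by
  classical
  have hfib := Finset.card_eq_sum_card_fiberwise
    (f := (QuotientGroup.mk : G → G ⧸ Subgroup.center G)) (s := S)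
    (t := S.image (QuotientGroup.mk : G → G ⧸ Subgroup.center G))
    (fun g hg => Finset.mem_image_of_mem _ hg)
  rw [hfib]
  apply Finset.dvd_sum
  intro q hq
  obtain ⟨g0, hg0S, hg0q⟩ := Finset.mem_image.mp hq
  have : (S.filter (fun g => (QuotientGroup.mk g : G ⧸ Subgroup.center G) = q)).card
      = Nat.card (Subgroup.center G) := by
    have himg : S.filter (fun g => (QuotientGroup.mk g : G ⧸ Subgroup.center G) = q)
        = Finset.image (fun z : Subgroup.center G => g0 * (z : G)) Finset.univ := by
      ext g
      simp only [Finset.mem_filter, Finset.mem_image, Finset.mem_univ, true_and]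
      constructor
      · rintro ⟨hgS, hgq⟩
        refine ⟨⟨g0⁻¹ * g, QuotientGroup.eq.mp (hg0q.trans hgq.symm)⟩, ?_⟩
        simp
      · rintro ⟨z, rfl⟩
        exact ⟨hcl g0 hg0S z z.2, by rw [QuotientGroup.mk_mul_of_mem g0 z.2, hg0q]⟩
    rw [himg, Finset.card_image_of_injective _
        (fun a b h => Subtype.ext (mul_left_cancel h)),
      Finset.card_univ, Nat.card_eq_fintype_card]
  rw [this]
end Aux

theorem stmt_17 (G : Type*) [Group G] [Fintype G]
    (hG : ∃ a b : G, a * b ≠ b * a) :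
    Nat.card (Subgroup.center G) ∣ vertexConnectivity (ncGraph G) := by
  classical
  have hne : ∃ k, k ∈ {k | ∃ S : Finset {x : G // x ∉ Subgroup.center G}, S.card = k ∧
      ¬ ((ncGraph G).induce {v | v ∉ S}).Connected} := by
    refine ⟨_, Finset.univ, rfl, ?_⟩
    intro h
    obtain ⟨v⟩ := h.nonempty
    exact v.2 (Finset.mem_univ _)
  have hmem := Nat.sInf_mem hne
  obtain ⟨S, hScard, hSdis⟩ := hmem
  have hVC : vertexConnectivity (ncGraph G) = S.card := hScard.symm
  rw [hVC]
  have hclosed : ∀ v ∈ S, ∀ z : Subgroup.center G,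
      (⟨(v : G) * z, aux_noncenter v.2 z.2⟩ : {x : G // x ∉ Subgroup.center G}) ∈ S := by
    intro v hv z
    by_contra hw
    have hcut := aux_erase_cut v hv z.2 (aux_noncenter v.2 z.2) hw hSdis
    have hle : sInf {k | ∃ S : Finset {x : G // x ∉ Subgroup.center G}, S.card = k ∧
        ¬ ((ncGraph G).induce {v | v ∉ S}).Connected} ≤ (S.erase v).card :=
      Nat.sInf_le ⟨S.erase v, rfl, hcut⟩
    rw [Finset.card_erase_of_mem hv] at hle
    have hpos : 0 < S.card := Finset.card_pos.mpr ⟨v, hv⟩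
    have : vertexConnectivity (ncGraph G) ≤ S.card - 1 := hle
    rw [hVC] at this
    omega
  have hinj : Function.Injective (Subtype.val : {x : G // x ∉ Subgroup.center G} → G) :=
    Subtype.val_injective
  have hcard : (S.image Subtype.val).card = S.card := Finset.card_image_of_injective _ hinj
  rw [← hcard]
  apply aux_card_dvd
  intro g hg z hz
  obtain ⟨v, hv, rfl⟩ := Finset.mem_image.mp hg
  exact Finset.mem_image_of_mem _ (hclosed v hv ⟨z, hz⟩)
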